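/- Let (Ω,𝒜,μ) be a probability space and Y:Ω→ℝ measurable. Suppose there are constants C>0, c>0, ρ∈(0,1) and measurable functions Y_n:Ω→ℝ (n≥1) such that each Y_n takes at most c·n values and sup_{ω∈Ω}|Y(ω)−Y_n(ω)|≤C·ρⁿ. Then the support of the law of Y has Lebesgue measure zero; in particular the law of Y is singular with respect to Lebesgue measure. -/

import Mathlib

open MeasureTheory Filter Topology

/-- The (topological) support of a measure on `ℝ`: points all of whose open
neighbourhoods have positive measure. -/
def msupport (μ : Measure ℝ) : Set ℝ :=
  {x : ℝ | ∀ U : Set ℝ, IsOpen U → x ∈ U → 0 < μ U}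

lemma compl_msupport_null (ν : Measure ℝ) : ν (msupport ν)ᶜ = 0 := by
  obtain ⟨b, hbc, hb⟩ := TopologicalSpace.exists_countable_basis ℝ
  have hsub : (msupport ν)ᶜ ⊆ ⋃₀ {U ∈ b | ν U = 0} := by
    intro x hx
    simp only [msupport, Set.mem_compl_iff, Set.mem_setOf_eq, not_forall] at hx
    obtain ⟨U, hU, hxU, hνU⟩ := hx
    have hU0 : ν U = 0 := le_antisymm (not_lt.mp hνU) zero_le
    obtain ⟨V, hVb, hxV, hVU⟩ := hb.2.mem_nhds_iff.mp (hU.mem_nhds hxU)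
    exact ⟨V, ⟨hVb, measure_mono_null hVU hU0⟩, hxV⟩
  exact measure_mono_null hsub
    ((measure_sUnion_null_iff (hbc.mono (Set.sep_subset _ _))).mpr fun t ht => ht.2)

lemma isClosed_msupport (ν : Measure ℝ) : IsClosed (msupport ν) := by
  rw [← isOpen_compl_iff, isOpen_iff_forall_mem_open]
  intro x hx
  simp only [msupport, Set.mem_compl_iff, Set.mem_setOf_eq, not_forall] at hx
  obtain ⟨U, hU, hxU, hνU⟩ := hx
  refine ⟨U, fun y hy hmem => hνU ?_, hU, hxU⟩
  exact hmem U hU hy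

/-- If `Y` is uniformly approximated at geometric speed `C ρⁿ` by random variables `Y_n`
taking at most `c·n` values, then the support of the law of `Y` is Lebesgue-null; in
particular the law of `Y` is singular with respect to Lebesgue measure. -/
theorem law_singular_of_geometric_approximation_by_simple
    {Ω : Type*} [MeasurableSpace Ω] (μ : Measure Ω) [IsProbabilityMeasure μ]
    (Y : Ω → ℝ) (hY : Measurable Y)
    (C c ρ : ℝ) (hC : 0 < C) (hc : 0 < c) (hρ : ρ ∈ Set.Ioo (0 : ℝ) 1)
    (Yn : ℕ → Ω → ℝ) (hYnmeas : ∀ n, Measurable (Yn n))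
    (hYnval : ∀ n : ℕ, 1 ≤ n → ∃ s : Finset ℝ, (s.card : ℝ) ≤ c * n ∧ ∀ ω, Yn n ω ∈ s)
    (happrox : ∀ n : ℕ, 1 ≤ n → ∀ ω : Ω, |Y ω - Yn n ω| ≤ C * ρ ^ n) :
    volume (msupport (μ.map Y)) = 0 ∧ μ.map Y ⟂ₘ volume := by
  obtain ⟨hρ0, hρ1⟩ := hρ
  set ν := μ.map Y with hν
  -- Step 1: the support of ν is contained in the closure of the range of Y.
  have hsub : msupport ν ⊆ closure (Set.range Y) := by
    intro x hx
    rw [mem_closure_iff]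
    intro U hU hxU
    have h := hx U hU hxU
    rw [hν, Measure.map_apply hY hU.measurableSet] at h
    obtain ⟨ω, hω⟩ := nonempty_of_measure_ne_zero h.ne'
    exact ⟨Y ω, hω, Set.mem_range_self ω⟩
  -- Step 2: bound volume of the support for each n ≥ 1.
  have hbound : ∀ n : ℕ, 1 ≤ n →
      volume (msupport ν) ≤ ENNReal.ofReal (2 * C * c * (n * ρ ^ n)) := by
    intro n hn
    obtain ⟨s, hscard, hsmem⟩ := hYnval n hn
    have hr : (0:ℝ) ≤ C * ρ ^ n := le_of_lt (mul_pos hC (pow_pos hρ0 n))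
    set K : Set ℝ := ⋃ v ∈ s, Metric.closedBall v (C * ρ ^ n) with hK
    have hKclosed : IsClosed K :=
      Set.Finite.isClosed_biUnion s.finite_toSet fun v _ => Metric.isClosed_closedBall
    have hrange : Set.range Y ⊆ K := by
      rintro _ ⟨ω, rfl⟩
      refine Set.mem_biUnion (hsmem ω) ?_
      rw [Metric.mem_closedBall, Real.dist_eq]
      exact happrox n hn ω
    have hcl : msupport ν ⊆ K := hsub.trans (closure_minimal hrange hKclosed)
    calc volume (msupport ν) ≤ volume K := measure_mono hcl
      _ ≤ ∑ v ∈ s, volume (Metric.closedBall v (C * ρ ^ n)) :=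
          measure_biUnion_finset_le s _
      _ = ∑ v ∈ s, ENNReal.ofReal (2 * (C * ρ ^ n)) := by
          simp [Real.volume_closedBall]
      _ = s.card • ENNReal.ofReal (2 * (C * ρ ^ n)) := by
          rw [Finset.sum_const]
      _ = ENNReal.ofReal ((s.card : ℝ) * (2 * (C * ρ ^ n))) := by
          rw [nsmul_eq_mul, ← ENNReal.ofReal_natCast, ← ENNReal.ofReal_mul (by positivity)]
      _ ≤ ENNReal.ofReal (2 * C * c * (n * ρ ^ n)) := by
          apply ENNReal.ofReal_le_ofReal
          have h2 : (0:ℝ) ≤ 2 * (C * ρ ^ n) := by positivity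
          calc (s.card : ℝ) * (2 * (C * ρ ^ n)) ≤ (c * n) * (2 * (C * ρ ^ n)) :=
                mul_le_mul_of_nonneg_right hscard h2
            _ = 2 * C * c * (n * ρ ^ n) := by ring
  -- Step 3: the bound tends to 0.
  have htend : Tendsto (fun n : ℕ => ENNReal.ofReal (2 * C * c * (n * ρ ^ n)))
      atTop (𝓝 0) := by
    have h1 : Tendsto (fun n : ℕ => 2 * C * c * (n * ρ ^ n)) atTop (𝓝 0) := by
      have := (tendsto_self_mul_const_pow_of_lt_one hρ0.le hρ1).const_mul (2 * C * c)
      simpa using this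
    simpa using (ENNReal.tendsto_ofReal h1)
  have hnull : volume (msupport ν) = 0 := by
    have hle : volume (msupport ν) ≤ 0 :=
      ge_of_tendsto htend (eventually_atTop.mpr ⟨1, fun n hn => hbound n hn⟩)
    exact le_antisymm hle zero_le
  refine ⟨hnull, ?_⟩
  exact ⟨(msupport ν)ᶜ, (isClosed_msupport ν).measurableSet.compl,
    compl_msupport_null ν, by rwa [compl_compl]⟩
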